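/- Every finite matroid that is 3-flat is pseudomodular. -/
import Mathlib


/-- A matroid on a finite ground set `N`, given by an integer-valued rank
function satisfying the standard rank axioms. -/
structure FinMatroid (N : Type) [Fintype N] [DecidableEq N] where
  r : Finset N → ℤ
  r_nonneg : ∀ A, 0 ≤ r A
  r_le_card : ∀ A, r A ≤ (A.card : ℤ)
  r_mono : ∀ ⦃A B : Finset N⦄, A ⊆ B → r A ≤ r B
  submodular : ∀ A B, r (A ∪ B) + r (A ∩ B) ≤ r A + r B

namespace FinMatroid

variable {N : Type} [Fintype N] [DecidableEq N]

/-- A set `F` is a flat if adding any element outside of `F` increases the rank. -/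
def IsFlat (M : FinMatroid N) (F : Finset N) : Prop :=
  ∀ n ∉ F, M.r F < M.r (insert n F)

instance (M : FinMatroid N) (F : Finset N) : Decidable (M.IsFlat F) := by
  unfold IsFlat; infer_instance

/-- The Δ function of a (multi-indexed) family of sets: `Δ(C) = Σ_{S ⊆ I} (−1)^{|S|} r(F_S)`,
where `F_S` is the intersection of the members indexed by `S` for nonempty `S`, and
`F_∅` is the union of all members of the family. -/
def delta (M : FinMatroid N) {ι : Type} [Fintype ι] [DecidableEq ι]
    (F : ι → Finset N) : ℤ :=
  ∑ S : Finset ι, (-1 : ℤ) ^ S.card *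
    M.r (if S.Nonempty then S.inf F else Finset.univ.sup F)

/-- `M` is `n`-flat if `Δ(C) ≤ 0` for every family `C` of at most `n` flats. -/
def NFlat (M : FinMatroid N) (n : ℕ) : Prop :=
  ∀ (ι : Type) (_ : Fintype ι) (_ : DecidableEq ι) (F : ι → Finset N),
    Fintype.card ι ≤ n → (∀ i, M.IsFlat (F i)) → M.delta F ≤ 0

/-- `M` is totally flat if `Δ(C) ≤ 0` for every finite family `C` of flats. -/
def TotallyFlat (M : FinMatroid N) : Prop :=
  ∀ (ι : Type) (_ : Fintype ι) (_ : DecidableEq ι) (F : ι → Finset N),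
    (∀ i, M.IsFlat (F i)) → M.delta F ≤ 0

/-- `r(A/B) := r(A ∪ B) − r(B)`, the rank of `A` after contracting `B`. -/
def relRk (M : FinMatroid N) (A B : Finset N) : ℤ :=
  M.r (A ∪ B) - M.r B

/-- `B₀` is the pseudointersection of `A` and `B`: a flat `B₀ ⊆ B` such that for every
flat `B₁ ⊆ B`, `r(A/B₁) = r(A/B)` if and only if `B₀ ⊆ B₁`. -/
def IsPseudoInter (M : FinMatroid N) (A B B₀ : Finset N) : Prop :=
  M.IsFlat B₀ ∧ B₀ ⊆ B ∧
    ∀ B₁, M.IsFlat B₁ → B₁ ⊆ B → (M.relRk A B₁ = M.relRk A B ↔ B₀ ⊆ B₁)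

/-- `M` is pseudomodular if the pseudointersection of `A` and `B` exists for
all flats `A`, `B`. -/
def Pseudomodular (M : FinMatroid N) : Prop :=
  ∀ A B, M.IsFlat A → M.IsFlat B → ∃ B₀, M.IsPseudoInter A B B₀

/-- The closure of `A`: the smallest flat containing `A`, i.e. the intersection
of all flats containing `A`. -/
def cl (M : FinMatroid N) (A : Finset N) : Finset N :=
  Finset.univ.filter (fun x => ∀ F : Finset N, M.IsFlat F → A ⊆ F → x ∈ F)

/-- A set `S` is cyclic if removing any element of `S` does not change its rank. -/
def Cyclic (M : FinMatroid N) (S : Finset N) : Prop :=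
  ∀ n ∈ S, M.r (S.erase n) = M.r S

/-- A circuit is a minimal dependent set: it is dependent, and every proper
subset is independent. -/
def IsCircuit (M : FinMatroid N) (S : Finset N) : Prop :=
  M.r S < (S.card : ℤ) ∧ ∀ T ⊂ S, M.r T = (T.card : ℤ)

end FinMatroid
namespace FinMatroid
variable {N : Type} [Fintype N] [DecidableEq N] (M : FinMatroid N)

lemma delta_fin3 (G : Fin 3 → Finset N) :
    M.delta G =
      M.r (G 0 ∪ (G 1 ∪ G 2)) - M.r (G 0) - M.r (G 1) - M.r (G 2)
        + M.r (G 0 ∩ G 1) + M.r (G 0 ∩ G 2) + M.r (G 1 ∩ G 2)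
        - M.r (G 0 ∩ (G 1 ∩ G 2)) := by
  have huniv : (Finset.univ : Finset (Finset (Fin 3))) =
      {∅, {0}, {1}, {2}, {0,1}, {0,2}, {1,2}, {0,1,2}} := by decide
  unfold delta
  rw [huniv]
  rw [show (Finset.univ : Finset (Fin 3)) = {0,1,2} from by decide]
  simp (config := { decide := true }) [Finset.sum_insert, Finset.mem_insert,
    Finset.inf_insert, Finset.sup_insert, Finset.inf_eq_inter, Finset.sup_eq_union]
  ring

lemma relRk_antitone (A : Finset N) {C C' : Finset N} (h : C ⊆ C') :
    M.relRk A C' ≤ M.relRk A C := by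
  have hsub := M.submodular (A ∪ C) C'
  have h1 : (A ∪ C) ∪ C' = A ∪ C' := by
    rw [Finset.union_assoc, Finset.union_eq_right.mpr h]
  have h2 : C ⊆ (A ∪ C) ∩ C' := Finset.subset_inter Finset.subset_union_right h
  have h3 := M.r_mono h2
  unfold relRk
  rw [h1] at hsub
  linarith

lemma mem_cl {A : Finset N} {x : N} :
    x ∈ M.cl A ↔ ∀ F, M.IsFlat F → A ⊆ F → x ∈ F := by
  simp [cl]

lemma subset_cl (A : Finset N) : A ⊆ M.cl A :=
  fun x hx => (M.mem_cl).2 fun _ _ hAF => hAF hx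

lemma cl_subset {A F : Finset N} (hF : M.IsFlat F) (h : A ⊆ F) : M.cl A ⊆ F :=
  fun _ hx => (M.mem_cl.1 hx) F hF h

lemma mem_cl_of_r_insert_eq {A : Finset N} {x : N}
    (hx : M.r (insert x A) = M.r A) : x ∈ M.cl A := by
  rw [mem_cl]
  intro F hF hAF
  by_contra hxF
  have h1 := hF x hxF
  have hsub := M.submodular (insert x A) F
  have h2 : insert x A ∪ F = insert x F := by
    ext y
    simp only [Finset.mem_union, Finset.mem_insert]
    constructor
    · rintro ((rfl | hy) | hy)
      · exact Or.inl rfl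
      · exact Or.inr (hAF hy)
      · exact Or.inr hy
    · rintro (rfl | hy)
      · exact Or.inl (Or.inl rfl)
      · exact Or.inr hy
  have h3 : A ⊆ insert x A ∩ F :=
    Finset.subset_inter (Finset.subset_insert _ _) hAF
  have h4 := M.r_mono h3
  rw [h2] at hsub
  linarith

lemma r_union_eq_of_forall {A S : Finset N}
    (h : ∀ x ∈ S, M.r (insert x A) = M.r A) : M.r (A ∪ S) = M.r A := by
  induction S using Finset.induction_on with
  | empty => simp
  | @insert x S hxS ih =>
    have ih' := ih fun y hy => h y (Finset.mem_insert_of_mem hy)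
    have hx := h x (Finset.mem_insert_self _ _)
    have hsub := M.submodular (A ∪ S) (insert x A)
    have h1 : (A ∪ S) ∪ insert x A = A ∪ insert x S := by
      ext y
      simp only [Finset.mem_union, Finset.mem_insert]
      tauto
    have h2 : A ⊆ (A ∪ S) ∩ insert x A :=
      Finset.subset_inter Finset.subset_union_left (Finset.subset_insert _ _)
    have h3 := M.r_mono h2
    have h4 : A ⊆ A ∪ insert x S := Finset.subset_union_left
    have h5 := M.r_mono h4
    rw [h1] at hsub
    linarith

lemma cl_eq_filter (A : Finset N) :
    M.cl A = Finset.univ.filter fun x => M.r (insert x A) = M.r A := by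
  apply Finset.Subset.antisymm
  · -- cl A ⊆ filter: show the filter set is a flat containing A
    set F : Finset N := Finset.univ.filter fun x => M.r (insert x A) = M.r A with hF
    have hAF : A ⊆ F := by
      intro x hx
      simp only [hF, Finset.mem_filter, Finset.mem_univ, true_and]
      rw [Finset.insert_eq_self.mpr hx]
    have hrF : M.r F = M.r A := by
      have h1 : M.r (A ∪ F) = M.r A := by
        apply M.r_union_eq_of_forall
        intro x hx
        simpa [hF] using hx
      have h2 := M.r_mono (Finset.subset_union_right : F ⊆ A ∪ F)
      have h3 := M.r_mono hAF
      linarith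
    have hflat : M.IsFlat F := by
      intro y hyF
      have hne : M.r (insert y A) ≠ M.r A := by
        simpa [hF] using hyF
      have hge : M.r A ≤ M.r (insert y A) := M.r_mono (Finset.subset_insert _ _)
      have hgt : M.r A < M.r (insert y A) := lt_of_le_of_ne hge (Ne.symm hne)
      have h6 : insert y A ⊆ insert y F := Finset.insert_subset_insert _ hAF
      have h7 := M.r_mono h6
      rw [hrF]
      linarith
    exact M.cl_subset hflat hAF
  · intro x hx
    simp only [Finset.mem_filter, Finset.mem_univ, true_and] at hx
    exact M.mem_cl_of_r_insert_eq hx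

lemma r_cl (A : Finset N) : M.r (M.cl A) = M.r A := by
  have h1 : M.r (A ∪ M.cl A) = M.r A := by
    apply M.r_union_eq_of_forall
    intro x hx
    rw [cl_eq_filter] at hx
    simpa using hx
  have h2 := M.r_mono (Finset.subset_union_right : M.cl A ⊆ A ∪ M.cl A)
  have h3 := M.r_mono (M.subset_cl A)
  linarith

lemma isFlat_cl (A : Finset N) : M.IsFlat (M.cl A) := by
  intro y hy
  rw [cl_eq_filter] at hy
  simp only [Finset.mem_filter, Finset.mem_univ, true_and] at hy
  have hge : M.r A ≤ M.r (insert y A) := M.r_mono (Finset.subset_insert _ _)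
  have hgt : M.r A < M.r (insert y A) := lt_of_le_of_ne hge (Ne.symm hy)
  have h6 : insert y A ⊆ insert y (M.cl A) :=
    Finset.insert_subset_insert _ (M.subset_cl A)
  have h7 := M.r_mono h6
  rw [M.r_cl]
  linarith

lemma isFlat_inter {F G : Finset N} (hF : M.IsFlat F) (hG : M.IsFlat G) :
    M.IsFlat (F ∩ G) := by
  have key : ∀ (F G : Finset N), M.IsFlat F → ∀ x ∉ F,
      M.r (F ∩ G) < M.r (insert x (F ∩ G)) := by
    intro F G hF x hxF
    have hsub := M.submodular (insert x (F ∩ G)) F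
    have h1 : insert x (F ∩ G) ∪ F = insert x F := by
      ext y
      simp only [Finset.mem_union, Finset.mem_insert, Finset.mem_inter]
      tauto
    have h2 : insert x (F ∩ G) ∩ F = F ∩ G := by
      ext y
      simp only [Finset.mem_inter, Finset.mem_insert]
      constructor
      · rintro ⟨(rfl | ⟨h, h'⟩), hyF⟩
        · exact absurd hyF hxF
        · exact ⟨h, h'⟩
      · rintro ⟨h, h'⟩
        exact ⟨Or.inr ⟨h, h'⟩, h⟩
    have h3 := hF x hxF
    rw [h1, h2] at hsub
    linarith
  intro x hx
  rw [Finset.mem_inter] at hx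
  push_neg at hx
  by_cases hxF : x ∈ F
  · have hxG : x ∉ G := hx hxF
    have := key G F hG x hxG
    rwa [Finset.inter_comm G F] at this
  · exact key F G hF x hxF

lemma flat_eq_of_subset_of_r_le {X W : Finset N} (hX : M.IsFlat X) (hsub : X ⊆ W)
    (hr : M.r W ≤ M.r X) : W = X := by
  apply Finset.Subset.antisymm _ hsub
  intro w hw
  by_contra hwX
  have h1 := hX w hwX
  have h2 : insert w X ⊆ W := Finset.insert_subset hw hsub
  have h3 := M.r_mono h2
  linarith

lemma inter_cl_eq {A B X : Finset N} (hB : M.IsFlat B) (hX : M.IsFlat X) (hXB : X ⊆ B)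
    (hm : M.relRk A X = M.relRk A B) : B ∩ M.cl (A ∪ X) = X := by
  have hsubset : X ⊆ B ∩ M.cl (A ∪ X) :=
    Finset.subset_inter hXB (Finset.subset_union_right.trans (M.subset_cl _))
  have hr : M.r (B ∩ M.cl (A ∪ X)) ≤ M.r X := by
    have hsub := M.submodular (M.cl (A ∪ X)) B
    have h1 : M.r (M.cl (A ∪ X)) = M.r (A ∪ X) := M.r_cl _
    have h2 : A ∪ B ⊆ M.cl (A ∪ X) ∪ B := by
      apply Finset.union_subset
      · exact (Finset.subset_union_left.trans (M.subset_cl (A ∪ X))).trans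
          Finset.subset_union_left
      · exact Finset.subset_union_right
    have h3 := M.r_mono h2
    have h4 : M.cl (A ∪ X) ∩ B = B ∩ M.cl (A ∪ X) := Finset.inter_comm _ _
    unfold relRk at hm
    rw [h4] at hsub
    linarith
  exact M.flat_eq_of_subset_of_r_le hX hsubset hr

lemma relRk_inter (h : M.NFlat 3) {A B X Y : Finset N}
    (hA : M.IsFlat A) (hB : M.IsFlat B)
    (hX : M.IsFlat X) (hY : M.IsFlat Y) (hXB : X ⊆ B) (hYB : Y ⊆ B)
    (hmX : M.relRk A X = M.relRk A B) (hmY : M.relRk A Y = M.relRk A B) :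
    M.relRk A (X ∩ Y) = M.relRk A B := by
  have hXeq : B ∩ M.cl (A ∪ X) = X := M.inter_cl_eq hB hX hXB hmX
  have hYeq : B ∩ M.cl (A ∪ Y) = Y := M.inter_cl_eq hB hY hYB hmY
  set F1 := M.cl (A ∪ X) with hF1
  set F2 := M.cl (A ∪ Y) with hF2
  have htriple : F1 ∩ (F2 ∩ B) = X ∩ Y := by
    rw [show F1 ∩ (F2 ∩ B) = (B ∩ F1) ∩ (B ∩ F2) from by
      ext y; simp only [Finset.mem_inter]; tauto]
    rw [hXeq, hYeq]
  have hd := h (Fin 3) inferInstance inferInstance ![F1, F2, B]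
    (by simp) (by
      intro i
      fin_cases i
      · exact M.isFlat_cl _
      · exact M.isFlat_cl _
      · exact hB)
  rw [M.delta_fin3] at hd
  simp only [Matrix.cons_val_zero, Matrix.cons_val_one, Matrix.head_cons,
    Matrix.cons_val_two, Matrix.tail_cons] at hd
  rw [htriple] at hd
  -- bounds
  have hrF1 : M.r F1 = M.r (A ∪ X) := M.r_cl _
  have hrF2 : M.r F2 = M.r (A ∪ Y) := M.r_cl _
  have hU : M.r (A ∪ B) ≤ M.r (F1 ∪ (F2 ∪ B)) := by
    apply M.r_mono
    apply Finset.union_subset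
    · exact (Finset.subset_union_left.trans (M.subset_cl (A ∪ X))).trans
        Finset.subset_union_left
    · exact Finset.subset_union_right.trans Finset.subset_union_right
  have hP : M.r (A ∪ X ∩ Y) ≤ M.r (F1 ∩ F2) := by
    apply M.r_mono
    apply Finset.union_subset
    · exact Finset.subset_inter
        (Finset.subset_union_left.trans (M.subset_cl (A ∪ X)))
        (Finset.subset_union_left.trans (M.subset_cl (A ∪ Y)))
    · exact Finset.subset_inter
        ((Finset.inter_subset_left.trans Finset.subset_union_right).trans
          (M.subset_cl (A ∪ X)))
        ((Finset.inter_subset_right.trans Finset.subset_union_right).trans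
          (M.subset_cl (A ∪ Y)))
  have hQ : M.r X ≤ M.r (F1 ∩ B) := by
    rw [Finset.inter_comm, hXeq]
  have hS : M.r Y ≤ M.r (F2 ∩ B) := by
    rw [Finset.inter_comm, hYeq]
  have hle : M.relRk A (X ∩ Y) ≤ M.relRk A B := by
    unfold relRk at hmX hmY ⊢
    linarith
  have hge : M.relRk A B ≤ M.relRk A (X ∩ Y) := by
    calc M.relRk A B ≤ M.relRk A X := M.relRk_antitone A hXB
    _ ≤ M.relRk A (X ∩ Y) := M.relRk_antitone A Finset.inter_subset_left
  omega

end FinMatroid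
/-- Every finite matroid that is 3-flat is pseudomodular. -/
theorem pseudomodular_of_threeFlat {N : Type} [Fintype N] [DecidableEq N]
    (M : FinMatroid N) (h : M.NFlat 3) : M.Pseudomodular := by
  intro A B hA hB
  classical
  -- the finite set of "minimizers"
  set S : Finset (Finset N) := Finset.univ.filter
    (fun X => M.IsFlat X ∧ X ⊆ B ∧ M.relRk A X = M.relRk A B) with hS
  have hmem : ∀ X, X ∈ S ↔ M.IsFlat X ∧ X ⊆ B ∧ M.relRk A X = M.relRk A B := by
    intro X; simp [hS]
  have hBS : B ∈ S := (hmem B).2 ⟨hB, Finset.Subset.refl _, rfl⟩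
  obtain ⟨B₀, hB₀S, hmin⟩ := S.exists_min_image (fun X => X.card) ⟨B, hBS⟩
  obtain ⟨hB₀flat, hB₀B, hB₀rel⟩ := (hmem B₀).1 hB₀S
  refine ⟨B₀, hB₀flat, hB₀B, ?_⟩
  intro B₁ hB₁flat hB₁B
  constructor
  · intro hrel
    have hinter : B₀ ∩ B₁ ∈ S := (hmem _).2
      ⟨M.isFlat_inter hB₀flat hB₁flat,
        Finset.inter_subset_left.trans hB₀B,
        M.relRk_inter h hA hB hB₀flat hB₁flat hB₀B hB₁B hB₀rel hrel⟩
    have hcard := hmin _ hinter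
    have hsub : B₀ ∩ B₁ ⊆ B₀ := Finset.inter_subset_left
    have : B₀ ∩ B₁ = B₀ := Finset.eq_of_subset_of_card_le hsub hcard
    rw [← this]
    exact Finset.inter_subset_right
  · intro hsub
    have h1 : M.relRk A B₁ ≤ M.relRk A B₀ := M.relRk_antitone A hsub
    have h2 : M.relRk A B ≤ M.relRk A B₁ := M.relRk_antitone A hB₁B
    omega
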